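/- Let (G,H,K) be a loop folder and U a subgroup of G containing H or containing K. Then (U, U ∩ H, U ∩ K) is a subfolder, i.e., U = (U ∩ H)(U ∩ K). -/
import Mathlib

open scoped Pointwise

/-- `(G, H, K)` is a loop folder: `K` is a transversal to every conjugate of the
subgroup `H` in `G`, and `1 ∈ K`. -/
def IsLoopFolder {G : Type*} [Group G] (H : Subgroup G) (K : Set G) : Prop :=
  (1 : G) ∈ K ∧ ∀ u g : G, ∃! k, k ∈ K ∧ ∃ h ∈ H, g = u⁻¹ * h * u * k

/-- If `(G,H,K)` is a loop folder and `U` is a subgroup of `G`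
containing `H` or containing `K`, then `(U, U ∩ H, U ∩ K)` is a subfolder,
i.e. `U = (U ∩ H)(U ∩ K)`. -/
theorem overgroup_factorization {G : Type*} [Group G] [Finite G]
    (H : Subgroup G) (K : Set G) (hfolder : IsLoopFolder H K)
    (U : Subgroup G) (hU : H ≤ U ∨ K ⊆ (U : Set G)) :
    (U : Set G) = ((U : Set G) ∩ (H : Set G)) * ((U : Set G) ∩ K) := by
  ext x
  constructor
  · intro hx
    obtain ⟨k, ⟨hkK, h, hH, hx'⟩, -⟩ := hfolder.2 1 x
    simp only [inv_one, one_mul, mul_one] at hx'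
    have key : h ∈ U ∧ k ∈ U := by
      rcases hU with hU | hU
      · have hhU : h ∈ U := hU hH
        refine ⟨hhU, ?_⟩
        have : k = h⁻¹ * x := by rw [hx']; group
        rw [this]; exact U.mul_mem (U.inv_mem hhU) hx
      · have hkU : k ∈ U := hU hkK
        refine ⟨?_, hkU⟩
        have : h = x * k⁻¹ := by rw [hx']; group
        rw [this]; exact U.mul_mem hx (U.inv_mem hkU)
    exact ⟨h, ⟨key.1, hH⟩, k, ⟨key.2, hkK⟩, hx'.symm⟩
  · rintro ⟨a, ⟨haU, -⟩, b, ⟨hbU, -⟩, rfl⟩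
    exact U.mul_mem haU hbU
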